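/- arXiv:1705.05457 — 3 statements merged into one kernel-verified Lean document; each statement's English description precedes it below -/
import Mathlib

section
/- Let A be a commutative unital semisimple Banach algebra of bounded complex functions on a set G (pointwise operations, evaluations are characters). If f ∈ A and σ(f) is not contained in the closure of f(G), then σ(f) contains a nonempty perfect subset of ℂ, and in particular σ(f) has the cardinality of the continuum. -/
open Set Metric Complex Cardinal

namespace Stmt1Aux

variable {A G : Type*} [NormedCommRing A] [NormedAlgebra ℂ A] [CompleteSpace A] [Nontrivial A]

/-- Key lemma: an isolated point of the spectrum lying at positive distance from the
range of `T f` leads to a contradiction (Riesz-projection / contour integral argument). -/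
lemma key (T : A →ₐ[ℂ] (G → ℂ)) (hT : Function.Injective T) (f : A) {lam : ℂ} {r : ℝ}
    (hlam : lam ∈ spectrum ℂ f) (hr : 0 < r)
    (hsp : ∀ z ∈ spectrum ℂ f, z = lam ∨ r < dist z lam)
    (hrange : ∀ g : G, r < dist (T f g) lam) : False := by
  -- every point of the sphere is in the resolvent set
  have hsphere : ∀ z ∈ sphere lam r, IsUnit (algebraMap ℂ A z - f) := by
    intro z hz
    rw [← spectrum.notMem_iff]
    intro hzs
    rw [mem_sphere] at hz
    rcases hsp z hzs with rfl | hlt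
    · rw [dist_self] at hz; exact hr.ne hz
    · exact lt_irrefl r (hz ▸ hlt)
  set F : ℂ → A := fun z => Ring.inverse (algebraMap ℂ A z - f) with hF
  have hcont : ContinuousOn F (sphere lam r) := by
    intro z hz
    have h1 : ContinuousAt (fun z : ℂ => algebraMap ℂ A z - f) z :=
      ((continuous_algebraMap ℂ A).continuousAt).sub continuousAt_const
    have h2 : ContinuousAt Ring.inverse ((fun z : ℂ => algebraMap ℂ A z - f) z) := by
      have := NormedRing.inverse_continuousAt (hsphere z hz).unit
      rwa [IsUnit.unit_spec] at this
    exact ContinuousAt.continuousWithinAt (Filter.Tendsto.comp h2 h1)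
  have hint : CircleIntegrable F lam r := hcont.circleIntegrable hr.le
  set e : A := ∮ z in C(lam, r), F z with he
  -- any (automatically continuous) character commutes with the contour integral
  have hchi : ∀ χ : A →ₐ[ℂ] ℂ, χ e = ∮ z in C(lam, r), (z - χ f)⁻¹ := by
    intro χ
    have hval : ∀ θ : ℝ, χ (F (circleMap lam r θ)) = (circleMap lam r θ - χ f)⁻¹ := by
      intro θ
      have hu := hsphere _ (circleMap_mem_sphere lam hr.le θ)
      have hmul : χ (F (circleMap lam r θ)) * (circleMap lam r θ - χ f) = 1 := by
        rw [hF]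
        have : χ (Ring.inverse (algebraMap ℂ A (circleMap lam r θ) - f) *
            (algebraMap ℂ A (circleMap lam r θ) - f)) = χ 1 := by
          rw [Ring.inverse_mul_cancel _ hu]
        rw [map_mul, map_one, map_sub, AlgHomClass.commutes] at this
        exact this
      exact eq_inv_of_mul_eq_one_left hmul
    have hLcomm := χ.toContinuousLinearMap.intervalIntegral_comp_comm hint.out
    have : χ e = ∫ θ in (0:ℝ)..(2*Real.pi),
        χ.toContinuousLinearMap (deriv (circleMap lam r) θ • F (circleMap lam r θ)) := by
      rw [he, circleIntegral]; exact hLcomm.symm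
    rw [this, circleIntegral]
    congr 1
    funext θ
    rw [map_smul]
    simp only [AlgHom.coe_toContinuousLinearMap]
    rw [hval θ]
  -- an abstract character sending f to lam
  obtain ⟨ψ₀, hψ₀⟩ := WeakDual.CharacterSpace.mem_spectrum_iff_exists.mp hlam
  set ψ : A →ₐ[ℂ] ℂ := WeakDual.CharacterSpace.equivAlgHom ψ₀ with hψ
  have hψf : ψ f = lam := hψ₀
  have h1 : ψ e = 2 * Real.pi * I := by
    rw [hchi ψ, hψf]
    exact circleIntegral.integral_sub_inv_of_mem_ball (mem_ball_self hr)
  -- all evaluation characters vanish on e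
  have h2 : T e = 0 := by
    funext g
    have hzero : ((Pi.evalAlgHom ℂ (fun _ : G => ℂ) g).comp T) e = 0 := by
      rw [hchi]
      have hw : ((Pi.evalAlgHom ℂ (fun _ : G => ℂ) g).comp T) f = T f g := rfl
      rw [hw]
      refine circleIntegral_eq_zero_of_differentiable_on_off_countable hr.le countable_empty ?_ ?_
      · refine (continuousOn_id.sub continuousOn_const).inv₀ ?_
        intro z hz hz0
        have hzw : z = T f g := sub_eq_zero.mp hz0
        have := hrange g
        rw [← hzw] at this
        exact absurd (mem_closedBall.mp hz) (not_le.mpr this)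
      · intro z hz
        have hz' : z ∈ ball lam r := hz.1
        have hzw : z - T f g ≠ 0 := by
          intro hz0
          have hzw : z = T f g := sub_eq_zero.mp hz0
          have := hrange g
          rw [← hzw] at this
          exact absurd (le_of_lt (mem_ball.mp hz')) (not_le.mpr this)
        exact ((differentiableAt_id.sub_const _).inv hzw)
    exact hzero
  have he0 : e = 0 := hT (by rw [h2, map_zero])
  rw [he0, map_zero] at h1
  exact two_pi_I_ne_zero h1.symm

end Stmt1Aux

/-- In a commutative unital semisimple Banach algebra of complex-valued
functions on a set `G` (evaluations being characters), if the spectrum of `f` is not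
contained in the closure of the range of `f`, then the spectrum contains a nonempty
perfect subset of `ℂ`; in particular it has the cardinality of the continuum. -/
theorem stmt1 {A G : Type*} [NormedCommRing A] [NormedAlgebra ℂ A] [CompleteSpace A]
    [Nontrivial A]
    (T : A →ₐ[ℂ] (G → ℂ)) (hT : Function.Injective T)
    (f : A) (h : ¬ spectrum ℂ f ⊆ closure (Set.range (T f))) :
    (∃ P : Set ℂ, P ⊆ spectrum ℂ f ∧ P.Nonempty ∧ Perfect P) ∧
      Cardinal.mk ↥(spectrum ℂ f) = Cardinal.continuum := by
  set S := spectrum ℂ f with hS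
  set Cs := closure (Set.range (T f)) with hCs
  have hCc : IsClosed Cs := isClosed_closure
  obtain ⟨x₀, hx₀S, hx₀C⟩ := Set.not_subset.mp h
  set X := S \ Cs with hX
  -- every point of X is an accumulation point of S
  have hacc : ∀ x ∈ X, AccPt x (Filter.principal S) := by
    intro x hx
    rw [accPt_iff_nhds]
    by_contra hcon
    push_neg at hcon
    obtain ⟨U, hU, hUx⟩ := hcon
    obtain ⟨r', hr', hball⟩ := Metric.mem_nhds_iff.mp hU
    obtain ⟨δ, hδ, hδball⟩ := Metric.mem_nhds_iff.mp (hCc.isOpen_compl.mem_nhds hx.2)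
    set r := min (δ/2) (r'/2) with hrdef
    have hr : 0 < r := lt_min (by linarith) (by linarith)
    refine Stmt1Aux.key T hT f hx.1 hr ?_ ?_
    · intro z hz
      by_contra hcon2
      push_neg at hcon2
      obtain ⟨hne, hle⟩ := hcon2
      have hzb : z ∈ Metric.ball x r' :=
        mem_ball.mpr (lt_of_le_of_lt hle (lt_of_le_of_lt (min_le_right _ _) (by linarith)))
      rcases hUx z ⟨hball hzb, hz⟩ with heq
      exact hne heq
    · intro g
      by_contra hcon2
      push_neg at hcon2
      have hb : T f g ∈ Metric.ball x δ :=
        mem_ball.mpr (lt_of_le_of_lt hcon2 (lt_of_le_of_lt (min_le_left _ _) (by linarith)))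
      exact (hδball hb) (subset_closure ⟨g, rfl⟩)
  -- the closure of X is a nonempty perfect subset of S
  have hPS : closure X ⊆ S := closure_minimal diff_subset (spectrum.isClosed f)
  have hperf : Perfect (closure X) := by
    refine ⟨isClosed_closure, ?_⟩
    intro x hx
    rw [accPt_iff_nhds]
    intro U hU
    by_cases hxX : x ∈ X
    · have hU' : U ∩ Csᶜ ∈ nhds x := Filter.inter_mem hU (hCc.isOpen_compl.mem_nhds hxX.2)
      obtain ⟨y, ⟨hyU, hyS⟩, hyne⟩ := accPt_iff_nhds.mp (hacc x hxX) _ hU'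
      exact ⟨y, ⟨hyU.1, subset_closure ⟨hyS, hyU.2⟩⟩, hyne⟩
    · obtain ⟨y, hyU, hyX⟩ := mem_closure_iff_nhds.mp hx U hU
      exact ⟨y, ⟨hyU, subset_closure hyX⟩, fun hyx => hxX (hyx ▸ hyX)⟩
  have hne : (closure X).Nonempty := ⟨x₀, subset_closure ⟨hx₀S, hx₀C⟩⟩
  refine ⟨⟨closure X, hPS, hne, hperf⟩, ?_⟩
  -- cardinality
  obtain ⟨j, hjr, _, hji⟩ := hperf.exists_nat_bool_injection hne
  have hinj : Function.Injective (fun x : ℕ → Bool => (⟨j x, hPS (hjr ⟨x, rfl⟩)⟩ : S)) := by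
    intro a b hab
    exact hji (congrArg Subtype.val hab)
  have hge : Cardinal.continuum ≤ Cardinal.mk ↥S := by
    have h1 : Cardinal.mk (ℕ → Bool) = Cardinal.continuum := by
      rw [Cardinal.mk_arrow, Cardinal.mk_bool, Cardinal.mk_nat]
      simp [Cardinal.two_power_aleph0]
    rw [← h1]
    exact Cardinal.mk_le_of_injective hinj
  have hle : Cardinal.mk ↥S ≤ Cardinal.continuum := by
    have := Cardinal.mk_set_le S
    rwa [mk_complex] at this
  exact le_antisymm hle hge
end

section
/- Let M be a von Neumann algebra and let φ, ψ be bounded linear functionals in the predual M_*. Define φ₁ := zs(ψ)·φ and φ₂ := (1 − zs(ψ))·φ, where zs(ψ) is the central support projection of ψ. Then φ = φ₁ + φ₂, φ₁ is absolutely continuous with respect to ψ (zs(φ₁) ≤ zs(ψ)), φ₂ is singular to ψ (zs(φ₂)·zs(ψ) = 0), this decomposition is unique, and ‖φ‖ = ‖φ₁‖ + ‖φ₂‖. -/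
lemma aux_pow_add {M : Type*} [Ring M] (p q : M) (hpq : p * q = 0) (hqp : q * p = 0) :
    ∀ n : ℕ, 1 ≤ n → (p + q) ^ n = p ^ n + q ^ n := by
  intro n hn
  induction n with
  | zero => omega
  | succ m ih =>
    rcases Nat.eq_or_lt_of_le hn with h | h
    · simp [← h]
    · have hm : 1 ≤ m := by omega
      have hqm : q ^ m * p = 0 := by
        obtain ⟨k, rfl⟩ := Nat.exists_eq_add_of_le hm
        rw [add_comm, pow_add, pow_one, mul_assoc, hqp, mul_zero]
      have hpm : p ^ m * q = 0 := by
        obtain ⟨k, rfl⟩ := Nat.exists_eq_add_of_le hm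
        rw [add_comm, pow_add, pow_one, mul_assoc, hpq, mul_zero]
      rw [pow_succ, ih hm, add_mul, mul_add, mul_add, hqm, hpm, ← pow_succ, ← pow_succ]
      simp

lemma aux_norm_sa {M : Type*} [NormedRing M] [StarRing M] [CStarRing M]
    (p q : M) (hp : IsSelfAdjoint p) (hq : IsSelfAdjoint q)
    (hpq : p * q = 0) (hqp : q * p = 0) : ‖p + q‖ ≤ max ‖p‖ ‖q‖ := by
  set m := max ‖p‖ ‖q‖ with hm
  have hm0 : 0 ≤ m := le_max_of_le_left (norm_nonneg p)
  have hs : IsSelfAdjoint (p + q) := hp.add hq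
  have key : ∀ k : ℕ, ‖p + q‖ ^ (2 ^ k) ≤ 2 * m ^ (2 ^ k) := by
    intro k
    have h1 : ‖p + q‖ ^ (2 ^ k) = ‖(p + q) ^ (2 ^ k)‖ := by
      have := hs.nnnorm_pow_two_pow k
      have := congrArg (fun r : NNReal => (r : ℝ)) this
      push_cast at this
      linarith [this]
    rw [h1, aux_pow_add p q hpq hqp _ (Nat.one_le_two_pow)]
    calc ‖p ^ 2 ^ k + q ^ 2 ^ k‖ ≤ ‖p ^ 2 ^ k‖ + ‖q ^ 2 ^ k‖ := norm_add_le _ _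
      _ ≤ ‖p‖ ^ 2 ^ k + ‖q‖ ^ 2 ^ k := by
          gcongr <;> exact norm_pow_le' _ (Nat.pos_of_ne_zero (by positivity))
      _ ≤ m ^ 2 ^ k + m ^ 2 ^ k := by
          gcongr <;> [exact le_max_left _ _; exact le_max_right _ _]
      _ = 2 * m ^ 2 ^ k := by ring
  by_contra hlt
  push_neg at hlt
  have hspos : 0 < ‖p + q‖ := lt_of_le_of_lt hm0 hlt
  set r := m / ‖p + q‖ with hr
  have hr0 : 0 ≤ r := div_nonneg hm0 hspos.le
  have hr1 : r < 1 := (div_lt_one hspos).2 hlt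
  have hone : ∀ k : ℕ, (1 : ℝ) ≤ 2 * r ^ (2 ^ k) := by
    intro k
    have hpow : 0 < ‖p + q‖ ^ (2 ^ k) := pow_pos hspos _
    have := key k
    rw [hr, div_pow]
    rw [← mul_div_assoc, le_div_iff₀ hpow, one_mul]
    linarith
  have htend : Filter.Tendsto (fun k : ℕ => 2 * r ^ (2 ^ k)) Filter.atTop (nhds 0) := by
    have h1 : Filter.Tendsto (fun n : ℕ => r ^ n) Filter.atTop (nhds 0) :=
      tendsto_pow_atTop_nhds_zero_of_lt_one hr0 hr1
    have h2 : Filter.Tendsto (fun k : ℕ => 2 ^ k) Filter.atTop Filter.atTop :=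
      tendsto_pow_atTop_atTop_of_one_lt one_lt_two
    simpa using (h1.comp h2).const_mul 2
  have := htend.eventually (eventually_lt_nhds (by norm_num : (0:ℝ) < 1))
  obtain ⟨k, hk⟩ := this.exists
  exact absurd (hone k) (not_le.2 hk)

lemma aux_norm_orth {M : Type*} [NormedRing M] [StarRing M] [CStarRing M]
    (a b : M) (h1 : star a * b = 0) (h2 : a * star b = 0) :
    ‖a + b‖ ≤ max ‖a‖ ‖b‖ := by
  have hba : star b * a = 0 := by
    have := congrArg star h1; simpa using this
  have hab' : b * star a = 0 := by
    have := congrArg star h2; simpa using this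
  set p := star a * a with hp
  set q := star b * b with hq
  have hpsa : IsSelfAdjoint p := by simp [hp, IsSelfAdjoint, star_mul]
  have hqsa : IsSelfAdjoint q := by simp [hq, IsSelfAdjoint, star_mul]
  have hpq : p * q = 0 := by
    rw [hp, hq, mul_assoc, ← mul_assoc a (star b) b, h2, zero_mul, mul_zero]
  have hqp : q * p = 0 := by
    rw [hp, hq, mul_assoc, ← mul_assoc b (star a) a, hab', zero_mul, mul_zero]
  have hsum : star (a + b) * (a + b) = p + q := by
    rw [star_add, add_mul, mul_add, mul_add, h1, hba, hp, hq]; abel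
  have hC : ‖a + b‖ * ‖a + b‖ = ‖p + q‖ := by
    rw [← hsum, CStarRing.norm_star_mul_self]
  have hkey : ‖p + q‖ ≤ max ‖p‖ ‖q‖ := aux_norm_sa p q hpsa hqsa hpq hqp
  have hpn : ‖p‖ = ‖a‖ * ‖a‖ := CStarRing.norm_star_mul_self
  have hqn : ‖q‖ = ‖b‖ * ‖b‖ := CStarRing.norm_star_mul_self
  set m := max ‖a‖ ‖b‖ with hm
  have hm0 : 0 ≤ m := le_max_of_le_left (norm_nonneg a)
  have hmax : max ‖p‖ ‖q‖ ≤ m * m := by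
    rw [hpn, hqn]
    exact max_le (mul_le_mul (le_max_left _ _) (le_max_left _ _) (norm_nonneg a) hm0)
      (mul_le_mul (le_max_right _ _) (le_max_right _ _) (norm_nonneg b) hm0)
  nlinarith [norm_nonneg (a + b)]

lemma aux_exists_unit (c : ℂ) : ∃ α : ℂ, ‖α‖ = 1 ∧ α * c = (‖c‖ : ℂ) := by
  by_cases hc : c = 0
  · exact ⟨1, by simp [hc]⟩
  · refine ⟨(‖c‖ : ℂ) / c, ?_, by field_simp⟩
    rw [norm_div, Complex.norm_real, norm_norm, div_self (norm_ne_zero_iff.2 hc)]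


/-- A projection commuting with everything. -/
def IsCentralProjection {M : Type*} [NonUnitalRing M] [Star M] (z : M) : Prop :=
  z * z = z ∧ star z = z ∧ ∀ x : M, z * x = x * z

/-- `z` is the central support of the functional `φ`: the smallest central projection
such that `φ` vanishes on `(1 − z)M`, i.e. `φ(x z) = φ(x)` for all `x`. -/
def IsCentralSupport {M : Type*} [Ring M] [StarRing M] (φ : M → ℂ) (z : M) : Prop :=
  IsCentralProjection z ∧ (∀ x : M, φ (x * z) = φ x) ∧
    ∀ z' : M, IsCentralProjection z' → (∀ x : M, φ (x * z') = φ x) → z * z' = z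

set_option maxHeartbeats 2000000 in
/-- Lebesgue decomposition with respect to a central support. With
`z = zs(ψ)`, setting `φ₁ = zψ·φ = φ(·z)` and `φ₂ = (1−z)·φ`, one has `φ = φ₁ + φ₂`,
`φ₁ ≪ ψ` (it vanishes on `(1−z)M`), `φ₂ ⊥ ψ` (it vanishes on `zM`), the decomposition
is unique, and `‖φ‖ = ‖φ₁‖ + ‖φ₂‖`. -/
theorem stmt4 {M : Type*} [NormedRing M] [StarRing M] [CStarRing M] [NormedAlgebra ℂ M]
    [StarModule ℂ M] [CompleteSpace M]
    (φ ψ : M →L[ℂ] ℂ) (z : M) (hz : IsCentralSupport (⇑ψ) z) :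
    φ = φ.comp ((ContinuousLinearMap.mul ℂ M).flip z)
        + φ.comp ((ContinuousLinearMap.mul ℂ M).flip (1 - z)) ∧
    (∀ x : M, φ.comp ((ContinuousLinearMap.mul ℂ M).flip z) (x * (1 - z)) = 0) ∧
    (∀ x : M, φ.comp ((ContinuousLinearMap.mul ℂ M).flip (1 - z)) (x * z) = 0) ∧
    (∀ ρ₁ ρ₂ : M →L[ℂ] ℂ, φ = ρ₁ + ρ₂ → (∀ x : M, ρ₁ (x * (1 - z)) = 0) →
      (∀ x : M, ρ₂ (x * z) = 0) →
      ρ₁ = φ.comp ((ContinuousLinearMap.mul ℂ M).flip z) ∧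
        ρ₂ = φ.comp ((ContinuousLinearMap.mul ℂ M).flip (1 - z))) ∧
    ‖φ‖ = ‖φ.comp ((ContinuousLinearMap.mul ℂ M).flip z)‖
        + ‖φ.comp ((ContinuousLinearMap.mul ℂ M).flip (1 - z))‖ := by
  obtain ⟨⟨hz2, hzstar, hzc⟩, -, -⟩ := hz
  set A := φ.comp ((ContinuousLinearMap.mul ℂ M).flip z) with hAdef
  set B := φ.comp ((ContinuousLinearMap.mul ℂ M).flip (1 - z)) with hBdef
  have hA : ∀ x : M, A x = φ (x * z) := fun x => rfl
  have hB : ∀ x : M, B x = φ (x * (1 - z)) := fun x => rfl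
  have h0 : z * (1 - z) = 0 := by rw [mul_sub, mul_one, hz2, sub_self]
  have h0' : (1 - z) * z = 0 := by rw [sub_mul, one_mul, hz2, sub_self]
  have hxdec : ∀ x : M, x * z + x * (1 - z) = x := by
    intro x; rw [mul_sub, mul_one]; abel
  have part1 : φ = A + B := by
    ext x
    simp only [ContinuousLinearMap.add_apply, hA, hB, ← map_add, hxdec]
  have part2 : ∀ x : M, A (x * (1 - z)) = 0 := by
    intro x; rw [hA, mul_assoc, h0', mul_zero, map_zero]
  have part3 : ∀ x : M, B (x * z) = 0 := by
    intro x; rw [hB, mul_assoc, h0, mul_zero, map_zero]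
  refine ⟨part1, part2, part3, ?_, ?_⟩
  · intro ρ₁ ρ₂ hsum hv1 hv2
    have key1 : ∀ x : M, ρ₁ x = A x := by
      intro x
      have e1 : ρ₁ x = ρ₁ (x * z) := by
        conv_lhs => rw [← hxdec x]
        rw [map_add, hv1, add_zero]
      have e2 : A x = ρ₁ (x * z) + ρ₂ (x * z) := by
        rw [hA, hsum]; rfl
      rw [e1, e2, hv2, add_zero]
    have key2 : ∀ x : M, ρ₂ x = B x := by
      intro x
      have e1 : ρ₂ x = ρ₂ (x * (1 - z)) := by
        conv_lhs => rw [← hxdec x]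
        rw [map_add, hv2, zero_add]
      have e2 : B x = ρ₁ (x * (1 - z)) + ρ₂ (x * (1 - z)) := by
        rw [hB, hsum]; rfl
      rw [e1, e2, hv1, zero_add]
    exact ⟨ContinuousLinearMap.ext key1, ContinuousLinearMap.ext key2⟩
  · have le1 : ‖φ‖ ≤ ‖A‖ + ‖B‖ := by
      calc ‖φ‖ = ‖A + B‖ := by rw [← part1]
        _ ≤ ‖A‖ + ‖B‖ := norm_add_le _ _
    have hznorm : ‖z‖ ≤ 1 := by
      have h1 : ‖star z * z‖ = ‖z‖ * ‖z‖ := CStarRing.norm_star_mul_self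
      rw [hzstar, hz2] at h1
      nlinarith [norm_nonneg z]
    have h1z2 : (1 - z) * (1 - z) = 1 - z := by
      rw [sub_mul, one_mul, mul_sub, mul_one, hz2]; abel
    have h1zstar : star (1 - z) = 1 - z := by simp [hzstar]
    have h1znorm : ‖(1 : M) - z‖ ≤ 1 := by
      have h1 : ‖star (1 - z) * (1 - z)‖ = ‖(1:M) - z‖ * ‖(1:M) - z‖ :=
        CStarRing.norm_star_mul_self
      rw [h1zstar, h1z2] at h1
      nlinarith [norm_nonneg ((1:M) - z)]
    have hzc' : ∀ x : M, (1 - z) * x = x * (1 - z) := by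
      intro x; rw [sub_mul, one_mul, hzc, mul_sub, mul_one]
    have horth1 : ∀ u v : M, (u * z) * (v * (1 - z)) = 0 := by
      intro u v
      rw [mul_assoc u z, ← mul_assoc z v, hzc v, mul_assoc v z, h0, mul_zero, mul_zero]
    have ge1 : ‖A‖ + ‖B‖ ≤ ‖φ‖ := by
      refine le_of_forall_pos_le_add ?_
      intro ε hε
      obtain ⟨x, hx1, hx2⟩ := A.exists_lt_apply_of_lt_opNorm
        (show ‖A‖ - ε/2 < ‖A‖ by linarith)
      obtain ⟨y, hy1, hy2⟩ := B.exists_lt_apply_of_lt_opNorm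
        (show ‖B‖ - ε/2 < ‖B‖ by linarith)
      obtain ⟨α, hα1, hα2⟩ := aux_exists_unit (φ (x * z))
      obtain ⟨β, hβ1, hβ2⟩ := aux_exists_unit (φ (y * (1 - z)))
      set a := α • (x * z) with ha
      set b := β • (y * (1 - z)) with hb
      set w := a + b with hw
      have hφw : φ w = ((‖φ (x * z)‖ + ‖φ (y * (1 - z))‖ : ℝ) : ℂ) := by
        rw [hw, map_add, ha, hb, map_smul, map_smul, smul_eq_mul, smul_eq_mul, hα2, hβ2]
        push_cast; ring
      have hnφw : ‖φ w‖ = ‖φ (x * z)‖ + ‖φ (y * (1 - z))‖ := by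
        rw [hφw, Complex.norm_real, Real.norm_eq_abs, abs_of_nonneg (by positivity)]
      have st1 : star a * b = 0 := by
        rw [ha, hb, star_smul, smul_mul_smul, star_mul, hzstar, hzc (star x), horth1,
          smul_zero]
      have st2 : a * star b = 0 := by
        rw [ha, hb, star_smul, smul_mul_smul, star_mul, h1zstar, hzc' (star y), horth1,
          smul_zero]
      have hna : ‖a‖ ≤ 1 := by
        rw [ha, norm_smul, hα1, one_mul]
        calc ‖x * z‖ ≤ ‖x‖ * ‖z‖ := norm_mul_le _ _
          _ ≤ 1 * 1 := mul_le_mul hx1.le hznorm (norm_nonneg z) zero_le_one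
          _ = 1 := one_mul 1
      have hnb : ‖b‖ ≤ 1 := by
        rw [hb, norm_smul, hβ1, one_mul]
        calc ‖y * (1 - z)‖ ≤ ‖y‖ * ‖(1:M) - z‖ := norm_mul_le _ _
          _ ≤ 1 * 1 := mul_le_mul hy1.le h1znorm (norm_nonneg _) zero_le_one
          _ = 1 := one_mul 1
      have hnw : ‖w‖ ≤ 1 := le_trans (aux_norm_orth a b st1 st2) (max_le hna hnb)
      have hbound : ‖φ w‖ ≤ ‖φ‖ := by
        calc ‖φ w‖ ≤ ‖φ‖ * ‖w‖ := φ.le_opNorm w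
          _ ≤ ‖φ‖ * 1 := mul_le_mul_of_nonneg_left hnw (norm_nonneg φ)
          _ = ‖φ‖ := mul_one _
      have hx2' : ‖A‖ - ε/2 < ‖φ (x * z)‖ := by rwa [hA] at hx2
      have hy2' : ‖B‖ - ε/2 < ‖φ (y * (1 - z))‖ := by rwa [hB] at hy2
      linarith [hnφw ▸ hbound]
    linarith
end

section
/- Let G be a group and suppose gH ∖ X ⊆ S, where H is an infinite subgroup of G, X is a finite subset, g ∈ G, and S = {x_k, x_k⁻¹ : k ∈ ℕ} is the set of the free generators of the free group F_∞ together with their inverses (G = F_∞). Then a contradiction follows; i.e., the set {x_k^{±1} : k ∈ ℕ} of generators and inverse generators of the free group on countably many generators does not almost contain any coset of an infinite subgroup (does not contain gH ∖ X for any infinite subgroup H, finite X, g ∈ F_∞). -/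
open scoped Pointwise

open FreeGroup in
private lemma aux_toWord (k i j : ℕ) (hki : k ≠ i) (hij : i ≠ j)
    (b1 b2 b3 : Bool) :
    (mk [(k, b1)] * mk [(i, b2)] * mk [(j, b3)] : FreeGroup ℕ).toWord
      = [(k, b1), (i, b2), (j, b3)] := by
  rw [mul_mk, mul_mk, toWord_mk]
  simp [FreeGroup.reduce, hki, hij]

open FreeGroup in
private lemma aux_of_eq_mk (n : ℕ) : (FreeGroup.of n : FreeGroup ℕ) = mk [(n, true)] := rfl

open FreeGroup in
private lemma aux_inv_of_eq_mk (n : ℕ) :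
    (FreeGroup.of n : FreeGroup ℕ)⁻¹ = mk [(n, false)] := by
  rw [aux_of_eq_mk, inv_mk]; rfl

open FreeGroup in
private lemma aux_single_toWord (n : ℕ) (b : Bool) :
    (mk [(n, b)] : FreeGroup ℕ).toWord = [(n, b)] := by
  rw [toWord_mk, reduce_singleton]

/-- The set `{x_k^{±1}} ⊆ F_∞` of free generators of the free group on
countably many generators together with their inverses does not almost contain any coset
of an infinite subgroup: for every infinite subgroup `H`, every `g` and every finite set
`X`, `gH ∖ X` is not contained in it. -/
theorem stmt11 (H : Subgroup (FreeGroup ℕ)) (hH : (H : Set (FreeGroup ℕ)).Infinite)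
    (g : FreeGroup ℕ) (X : Set (FreeGroup ℕ)) (hX : X.Finite) :
    ¬ (g • (H : Set (FreeGroup ℕ)) \ X ⊆
        Set.range (FreeGroup.of : ℕ → FreeGroup ℕ) ∪
          Set.range (fun k : ℕ => (FreeGroup.of k)⁻¹)) := by
  intro hsub
  classical
  set Y : Set (FreeGroup ℕ) := g • (H : Set (FreeGroup ℕ)) \ X with hYdef
  have hYinf : Y.Infinite := (hH.smul_set (a := g)).diff hX
  -- every element of Y is of the form mk [(n, b)]
  have hform : ∀ y ∈ Y, ∃ n : ℕ, ∃ b : Bool, y = FreeGroup.mk [(n, b)] := by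
    intro y hy
    rcases hsub hy with ⟨n, rfl⟩ | ⟨n, rfl⟩
    · exact ⟨n, true, aux_of_eq_mk n⟩
    · exact ⟨n, false, aux_inv_of_eq_mk n⟩
  -- the set of indices occurring in Y
  set T : Set ℕ := {n | ∃ b : Bool, FreeGroup.mk [(n, b)] ∈ Y} with hTdef
  have hTinf : T.Infinite := by
    intro hTfin
    apply hYinf
    have : Y ⊆ (fun p : ℕ × Bool => FreeGroup.mk [p]) '' (T ×ˢ (Set.univ : Set Bool)) := by
      intro y hy
      rcases hform y hy with ⟨n, b, rfl⟩
      exact ⟨(n, b), ⟨⟨b, hy⟩, trivial⟩, rfl⟩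
    exact ((hTfin.prod (Set.finite_univ)).image _).subset this
  -- pick two distinct indices i, j with elements a, b in Y
  obtain ⟨i, hiT⟩ := hTinf.nonempty
  obtain ⟨j, hjT, hji⟩ := ((hTinf.diff (Set.finite_singleton i)).nonempty)
  have hij : i ≠ j := fun h => hji (by simp [h.symm])
  obtain ⟨ba, haY⟩ := hiT
  obtain ⟨bb, hbY⟩ := hjT
  set a : FreeGroup ℕ := FreeGroup.mk [(i, ba)] with hadef
  set b : FreeGroup ℕ := FreeGroup.mk [(j, bb)] with hbdef
  -- choose a sign for each index in T
  have hTch : ∀ k ∈ T, ∃ bc : Bool, FreeGroup.mk [(k, bc)] ∈ Y := fun k hk => hk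
  choose! f hf using hTch
  set K : Set ℕ := T \ {i, j} with hKdef
  have hKinf : K.Infinite := hTinf.diff (Set.toFinite _)
  set F : ℕ → FreeGroup ℕ := fun k => FreeGroup.mk [(k, f k)] * a⁻¹ * b with hFdef
  -- membership in the coset: F k ∈ g • H for k ∈ K
  have hmemH : ∀ y ∈ Y, g⁻¹ * y ∈ H := by
    intro y hy
    have := hy.1
    rw [Set.mem_smul_set_iff_inv_smul_mem] at this
    simpa using this
  have hFcoset : ∀ k ∈ K, F k ∈ g • (H : Set (FreeGroup ℕ)) := by
    intro k hk
    have hc : FreeGroup.mk [(k, f k)] ∈ Y := hf k hk.1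
    rw [Set.mem_smul_set_iff_inv_smul_mem]
    have h1 := hmemH _ hc
    have h2 := hmemH _ haY
    have h3 := hmemH _ hbY
    have key : g⁻¹ • F k = (g⁻¹ * FreeGroup.mk [(k, f k)]) * (g⁻¹ * a)⁻¹ * (g⁻¹ * b) := by
      simp only [hFdef, smul_eq_mul]
      group
    rw [key]
    exact H.mul_mem (H.mul_mem h1 (H.inv_mem h2)) h3
  -- F k is not in S (its reduced word has length 3)
  have hFtoWord : ∀ k ∈ K, (F k).toWord = [(k, f k), (i, !ba), (j, bb)] := by
    intro k hk
    have hki : k ≠ i := fun h => hk.2 (by simp [h])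
    have : a⁻¹ = FreeGroup.mk [(i, !ba)] := by
      rw [hadef, FreeGroup.inv_mk]; rfl
    rw [hFdef]
    simp only [this, hbdef]
    exact aux_toWord k i j hki hij _ _ _
  have hFnotS : ∀ k ∈ K, F k ∉
      (Set.range (FreeGroup.of : ℕ → FreeGroup ℕ) ∪
        Set.range (fun k : ℕ => (FreeGroup.of k)⁻¹)) := by
    intro k hk hmem
    have h3 : (F k).toWord.length = 3 := by rw [hFtoWord k hk]; rfl
    rcases hmem with ⟨n, hn⟩ | ⟨n, hn⟩
    · rw [← hn, aux_of_eq_mk, aux_single_toWord] at h3; simp at h3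
    · simp only [← hn, aux_inv_of_eq_mk, aux_single_toWord] at h3; simp at h3
  -- hence F k ∈ X for k ∈ K
  have hFX : Set.MapsTo F K X := by
    intro k hk
    by_contra hnX
    exact hFnotS k hk (hsub ⟨hFcoset k hk, hnX⟩)
  -- F is injective on K
  have hFinj : Set.InjOn F K := by
    intro k hk k' hk' he
    have : FreeGroup.mk [(k, f k)] = FreeGroup.mk [(k', f k')] := by
      have := mul_right_cancel (mul_right_cancel he)
      exact this
    have := congrArg FreeGroup.toWord this
    rw [aux_single_toWord, aux_single_toWord] at this
    exact (Prod.mk.injEq _ _ _ _ ▸ (List.cons.injEq _ _ _ _ ▸ this).1).1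
  exact hKinf ((hX.subset (hFX.image_subset)).of_finite_image hFinj)
end
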